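/- Let K be a number field, P a prime ideal of O_K with P-adic valuation v_P, and let λ, μ ∈ K* satisfy λ + μ = 1. Set t := max(|v_P(λ)|, |v_P(μ)|). If t > 0, then v_P(λμ) = −2t or v_P(λμ) = t; in particular v_P(λμ) ≡ t (mod 3). -/

import Mathlib

open NumberField IsDedekindDomain
open scoped Multiplicative

open scoped Classical in
/-- The additive `P`-adic valuation on a number field `K`, normalized so that
`vP P x` is the exponent of `P` in the factorization of `x`, with `vP P 0 = 0`. -/
noncomputable def vP {K : Type} [Field K] [NumberField K]
    (P : HeightOneSpectrum (𝓞 K)) (x : K) : ℤ :=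
  if hx : x = 0 then 0
  else - Multiplicative.toAdd (WithZero.unzero ((P.valuation K).ne_zero_iff.mpr hx))

variable {K : Type} [Field K] [NumberField K] (P : HeightOneSpectrum (𝓞 K))

lemma vP_spec {x : K} (hx : x ≠ 0) :
    P.valuation K x = ((Multiplicative.ofAdd (-vP P x) : Multiplicative ℤ) : WithZero (Multiplicative ℤ)) := by
  rw [vP, dif_neg hx, neg_neg, ofAdd_toAdd, WithZero.coe_unzero]

lemma vP_le_iff {x y : K} (hx : x ≠ 0) (hy : y ≠ 0) :
    vP P x ≤ vP P y ↔ P.valuation K y ≤ P.valuation K x := by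
  rw [vP_spec P hx, vP_spec P hy, WithZero.coe_le_coe, Multiplicative.ofAdd_le, neg_le_neg_iff]

lemma vP_one : vP P (1 : K) = 0 := by
  have h := vP_spec P (one_ne_zero (α := K))
  rw [map_one] at h
  have : (Multiplicative.ofAdd (-vP P (1:K)) : Multiplicative ℤ) = 1 := by
    exact_mod_cast h.symm
  have := congrArg Multiplicative.toAdd this
  simpa using this

lemma vP_mul {x y : K} (hx : x ≠ 0) (hy : y ≠ 0) :
    vP P (x * y) = vP P x + vP P y := by
  have hxy : x * y ≠ 0 := mul_ne_zero hx hy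
  have h : P.valuation K (x * y) = P.valuation K x * P.valuation K y := map_mul _ _ _
  rw [vP_spec P hx, vP_spec P hy, vP_spec P hxy, ← WithZero.coe_mul, WithZero.coe_inj,
    ← ofAdd_add] at h
  have := congrArg Multiplicative.toAdd h
  simp only [toAdd_ofAdd] at this
  omega

lemma vP_lt_iff {x y : K} (hx : x ≠ 0) (hy : y ≠ 0) :
    vP P x < vP P y ↔ P.valuation K y < P.valuation K x := by
  rw [lt_iff_not_ge, vP_le_iff P hy hx, ← lt_iff_not_ge]

lemma vP_eq_of_val_eq {x y : K} (hx : x ≠ 0) (hy : y ≠ 0)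
    (h : P.valuation K x = P.valuation K y) : vP P x = vP P y :=
  le_antisymm ((vP_le_iff P hx hy).mpr h.ge) ((vP_le_iff P hy hx).mpr h.le)

/-- **Valuation of `λμ` for a solution of the unit equation**. If `λ, μ ∈ K*` satisfy
`λ + μ = 1` and `t := max(|v_P λ|, |v_P μ|) > 0`, then `v_P(λμ) = -2t` or `v_P(λμ) = t`;
in particular `v_P(λμ) ≡ t (mod 3)`. -/
theorem valuation_mul_of_unit_equation
    (K : Type) [Field K] [NumberField K]
    (P : HeightOneSpectrum (𝓞 K))
    (lam mu : K) (hlam : lam ≠ 0) (hmu : mu ≠ 0) (hsum : lam + mu = 1)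
    (t : ℤ) (ht : t = max |vP P lam| |vP P mu|) (htpos : 0 < t) :
    (vP P (lam * mu) = -2 * t ∨ vP P (lam * mu) = t) ∧
    vP P (lam * mu) ≡ t [ZMOD 3] := by
  have hone : (1 : K) ≠ 0 := one_ne_zero
  have hmul := vP_mul P hlam hmu
  have h1 := vP_one P (K := K)
  set a := vP P lam with ha
  set b := vP P mu with hb
  have key : (a = b ∧ a ≤ 0) ∨ (a < b ∧ a = 0) ∨ (b < a ∧ b = 0) := by
    rcases lt_trichotomy a b with h | h | h
    · -- v mu < v lam, so v(lam+mu) = v lam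
      have hv : P.valuation K mu < P.valuation K lam := (vP_lt_iff P hlam hmu).mp h
      have := (P.valuation K).map_add_eq_of_lt_left hv
      rw [hsum] at this
      have := vP_eq_of_val_eq P hone hlam this
      exact Or.inr (Or.inl ⟨h, by omega⟩)
    · -- equal valuations: v 1 ≤ v lam
      have hvle : P.valuation K (lam + mu) ≤ max (P.valuation K lam) (P.valuation K mu) :=
        (P.valuation K).map_add lam mu
      have heq : P.valuation K lam = P.valuation K mu :=
        le_antisymm ((vP_le_iff P hmu hlam).mp h.ge) ((vP_le_iff P hlam hmu).mp h.le)
      rw [hsum, ← heq, max_self] at hvle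
      have := (vP_le_iff P hlam hone).mpr hvle
      exact Or.inl ⟨h, by omega⟩
    · have hv : P.valuation K lam < P.valuation K mu := (vP_lt_iff P hmu hlam).mp h
      have := (P.valuation K).map_add_eq_of_lt_right hv
      rw [hsum] at this
      have := vP_eq_of_val_eq P hone hmu this
      exact Or.inr (Or.inr ⟨h, by omega⟩)
  have habs : t = max |a| |b| := ht
  have main : vP P (lam * mu) = -2 * t ∨ vP P (lam * mu) = t := by
    rcases key with ⟨heq, hle⟩ | ⟨hlt, h0⟩ | ⟨hlt, h0⟩
    · have h1 : |a| = -a := abs_of_nonpos hle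
      have ht' : t = -a := by rw [habs, ← heq, h1, max_self]
      left; rw [hmul]; omega
    · have hbpos : 0 < b := h0 ▸ hlt
      have ht' : t = b := by
        rw [habs, h0, abs_zero, abs_of_pos hbpos]; omega
      right; rw [hmul]; omega
    · have hapos : 0 < a := h0 ▸ hlt
      have ht' : t = a := by
        rw [habs, h0, abs_zero, abs_of_pos hapos]; omega
      right; rw [hmul]; omega
  refine ⟨main, ?_⟩
  have : (3 : ℤ) ∣ t - vP P (lam * mu) := by rcases main with h | h <;> omega
  exact (Int.modEq_iff_dvd).mpr this
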